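/- For the unit equilateral triangle with vertices z_j = ζ^j/√3 (ζ = e^{2πi/3}, j = 0,1,2) and weights a on its three edges, the map Λ = (D F_{(Id,a)}, D L_{Id}) has rank 7 if and only if a_{[z_0,z_1]} + a_{[z_1,z_2]} + a_{[z_2,z_0]} ≠ 0. -/
import Mathlib


/-- Differential of the force contribution of a single unit edge. -/
noncomputable def dForce (w wdot : ℝ) (d dPhi : ℂ) : ℂ :=
  (wdot : ℂ) * d +
    (w : ℂ) * (dPhi - d * ((((starRingEnd ℂ d) * dPhi).re : ℝ) : ℂ))

/-- For the unit equilateral triangle with vertices `z j = ζ^j/√3`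
(`ζ = e^{2πi/3}`) and weights `a` on its three edges, the map
`Λ = (D F_{(Id,a)}, D L_{Id})` has rank `7` (equivalently, its kernel is
reduced to the translations) if and only if
`a_{[z₀,z₁]} + a_{[z₁,z₂]} + a_{[z₂,z₀]} ≠ 0`. -/
theorem triangle_flexible_iff
    (ζ : ℂ) (hζ : ζ = Complex.exp (2 * Real.pi * Complex.I / 3))
    (z : ZMod 3 → ℂ)
    (hz : ∀ j : ZMod 3, z j = ζ ^ (j.val) / (Real.sqrt 3 : ℂ))
    (a : ZMod 3 → ℝ) (ha : ∀ j, a j ≠ 0) :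
    (∀ (Ψ : ZMod 3 → ℂ) (adot : ZMod 3 → ℝ),
      (∀ j : ZMod 3,
        dForce (a j) (adot j) (z (j + 1) - z j) (Ψ (j + 1) - Ψ j)
          + dForce (a (j - 1)) (adot (j - 1)) (z (j - 1) - z j)
              (Ψ (j - 1) - Ψ j) = 0) →
      (∀ j : ZMod 3,
        ((starRingEnd ℂ (z j - z (j + 1))) * (Ψ j - Ψ (j + 1))).re = 0) →
      ((∃ e : ℂ, ∀ j, Ψ j = e) ∧ ∀ j, adot j = 0))
    ↔ a 0 + a 1 + a 2 ≠ 0 := by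
  set s := Real.sqrt 3 with hsdef
  have hs3 : s * s = 3 := Real.mul_self_sqrt (by norm_num)
  have hs0 : (0:ℝ) < s := Real.sqrt_pos.mpr (by norm_num)
  have hsC : (s : ℂ) ≠ 0 := by
    simpa using Complex.ofReal_ne_zero.mpr (ne_of_gt hs0)
  have hζ' : ζ = ⟨-(1/2), s / 2⟩ := by
    have h : (2 * Real.pi * Complex.I / 3) = ((2 * Real.pi / 3 : ℝ) : ℂ) * Complex.I := by
      push_cast; ring
    rw [hζ, h, Complex.exp_mul_I]
    have hc : Real.cos (2 * Real.pi / 3) = -(1/2) := by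
      have : (2 : ℝ) * Real.pi / 3 = Real.pi - Real.pi/3 := by ring
      rw [this, Real.cos_pi_sub, Real.cos_pi_div_three]
    have hsn : Real.sin (2 * Real.pi / 3) = s / 2 := by
      have : (2 : ℝ) * Real.pi / 3 = Real.pi - Real.pi/3 := by ring
      rw [this, Real.sin_pi_sub, Real.sin_pi_div_three]
    rw [← Complex.ofReal_cos, ← Complex.ofReal_sin, hc, hsn]
    apply Complex.ext <;> simp
  have hz0 : z 0 = ⟨s/3, 0⟩ := by
    rw [hz, div_eq_iff hsC]
    show ζ ^ (0:ℕ) = _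
    apply Complex.ext <;>
      simp [Complex.ofReal_def, Complex.mul_re, Complex.mul_im] <;> nlinarith
  have hz1 : z 1 = ⟨-(s/6), 1/2⟩ := by
    rw [hz, div_eq_iff hsC]
    show ζ ^ (1:ℕ) = _
    rw [pow_one, hζ']
    apply Complex.ext <;>
      simp [Complex.ofReal_def, Complex.mul_re, Complex.mul_im] <;> nlinarith
  have hz2 : z 2 = ⟨-(s/6), -(1/2)⟩ := by
    rw [hz, div_eq_iff hsC]
    show ζ ^ (2:ℕ) = _
    rw [pow_two, hζ']
    apply Complex.ext <;>
      simp [Complex.ofReal_def, Complex.mul_re, Complex.mul_im] <;> nlinarith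
  constructor
  · -- kernel trivial → sum nonzero
    intro hker
    by_contra hσ'
    have hσ : a 0 + a 1 + a 2 = 0 := by simpa using hσ'
    have hsne : s ≠ 0 := ne_of_gt hs0
    have hsne : s ≠ 0 := ne_of_gt hs0
    set Ψ : ZMod 3 → ℂ := fun j => if j = 0 then 0 else if j = 1 then ⟨-(1/2), -(s/2)⟩ else ⟨1/2, -(s/2)⟩ with hΨdef
    set adot : ZMod 3 → ℝ := fun j =>
      if j = 0 then -(a 0 + 2*a 1)*s/3 else if j = 1 then (2*a 0 + a 1)*s/3 else (2*a 1 + a 2)*s/3 with hadef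
    have hΨ0 : Ψ 0 = 0 := rfl
    have hΨ1 : Ψ 1 = ⟨-(1/2), -(s/2)⟩ := rfl
    have hΨ2 : Ψ 2 = ⟨1/2, -(s/2)⟩ := rfl
    have had0 : adot 0 = -(a 0 + 2*a 1)*s/3 := rfl
    have had1 : adot 1 = (2*a 0 + a 1)*s/3 := rfl
    have had2 : adot 2 = (2*a 1 + a 2)*s/3 := rfl
    have hcase : ∀ j : ZMod 3, j = 0 ∨ j = 1 ∨ j = 2 := by decide
    have e01 : (0:ZMod 3) + 1 = 1 := by decide
    have e0m : (0:ZMod 3) - 1 = 2 := by decide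
    have e11 : (1:ZMod 3) + 1 = 2 := by decide
    have e1m : (1:ZMod 3) - 1 = 0 := by decide
    have e21 : (2:ZMod 3) + 1 = 0 := by decide
    have e2m : (2:ZMod 3) - 1 = 1 := by decide
    have hlen : ∀ j : ZMod 3,
        ((starRingEnd ℂ (z j - z (j + 1))) * (Ψ j - Ψ (j + 1))).re = 0 := by
      intro j
      rcases hcase j with h|h|h <;> subst h
      · rw [e01, hz0, hz1, hΨ0, hΨ1]
        simp only [Complex.mul_re, Complex.sub_re, Complex.sub_im, Complex.conj_re,
          Complex.conj_im, RingHom.coe_coe, Complex.zero_re, Complex.zero_im]; ring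
      · rw [e11, hz1, hz2, hΨ1, hΨ2]
        simp only [Complex.mul_re, Complex.sub_re, Complex.sub_im, Complex.conj_re,
          Complex.conj_im, RingHom.coe_coe, Complex.zero_re, Complex.zero_im]; ring
      · rw [e21, hz2, hz0, hΨ2, hΨ0]
        simp only [Complex.mul_re, Complex.sub_re, Complex.sub_im, Complex.conj_re,
          Complex.conj_im, RingHom.coe_coe, Complex.zero_re, Complex.zero_im]; ring
    have hforce : ∀ j : ZMod 3,
        dForce (a j) (adot j) (z (j + 1) - z j) (Ψ (j + 1) - Ψ j)
          + dForce (a (j - 1)) (adot (j - 1)) (z (j - 1) - z j)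
              (Ψ (j - 1) - Ψ j) = 0 := by
      intro j
      rcases hcase j with h|h|h <;> subst h
      · rw [dForce, dForce, e01, e0m, hz0, hz1, hz2, hΨ0, hΨ1, hΨ2, had0, had2]
        simp only [Complex.ext_iff, Complex.add_re, Complex.add_im, Complex.mul_re, Complex.mul_im,
            Complex.sub_re, Complex.sub_im, Complex.ofReal_re, Complex.ofReal_im,
            Complex.zero_re, Complex.zero_im, Complex.conj_re, Complex.conj_im, RingHom.coe_coe]
        constructor
        · linear_combination ((a 0 - a 2)/6)*hs3
        · linear_combination (-(2*s/3))*hσ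
      · rw [dForce, dForce, e11, e1m, hz0, hz1, hz2, hΨ0, hΨ1, hΨ2, had1, had0]
        simp only [Complex.ext_iff, Complex.add_re, Complex.add_im, Complex.mul_re, Complex.mul_im,
            Complex.sub_re, Complex.sub_im, Complex.ofReal_re, Complex.ofReal_im,
            Complex.zero_re, Complex.zero_im, Complex.conj_re, Complex.conj_im, RingHom.coe_coe]
        constructor
        · linear_combination (-(a 0 + 2*a 1)/6)*hs3
        · ring
      · rw [dForce, dForce, e21, e2m, hz0, hz1, hz2, hΨ0, hΨ1, hΨ2, had2, had1]
        simp only [Complex.ext_iff, Complex.add_re, Complex.add_im, Complex.mul_re, Complex.mul_im,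
            Complex.sub_re, Complex.sub_im, Complex.ofReal_re, Complex.ofReal_im,
            Complex.zero_re, Complex.zero_im, Complex.conj_re, Complex.conj_im, RingHom.coe_coe]
        constructor
        · linear_combination ((2*a 1 + a 2)/6)*hs3
        · linear_combination ((2*s/3))*hσ
    obtain ⟨⟨e, he⟩, -⟩ := hker Ψ adot hforce hlen
    have h0 := (he 0).trans (he 1).symm
    rw [hΨ0, hΨ1, Complex.ext_iff] at h0
    norm_num at h0
  · -- sum nonzero → kernel trivial
    intro hσ Ψ adot hforce hlen
    have hsne : s ≠ 0 := ne_of_gt hs0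
    have hlen' : ∀ j, (((starRingEnd ℂ) (z (j+1) - z j)) * (Ψ (j+1) - Ψ j)).re = 0 := by
      intro j
      have e1 : z (j+1) - z j = -(z j - z (j+1)) := by ring
      have e2 : Ψ (j+1) - Ψ j = -(Ψ j - Ψ (j+1)) := by ring
      rw [e1, e2, map_neg, neg_mul_neg]; exact hlen j
    have hG : ∀ j : ZMod 3, ((adot j : ℂ) * (z (j+1) - z j) + (a j : ℂ) * (Ψ (j+1) - Ψ j))
        + ((adot (j-1) : ℂ) * (z (j-1) - z j) + (a (j-1) : ℂ) * (Ψ (j-1) - Ψ j)) = 0 := by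
      intro j
      have h := hforce j
      have h2 := hlen (j-1)
      rw [sub_add_cancel] at h2
      rw [dForce, dForce, hlen' j, h2] at h
      simpa using h
    have e01 : (0:ZMod 3) + 1 = 1 := by decide
    have e0m : (0:ZMod 3) - 1 = 2 := by decide
    have e11 : (1:ZMod 3) + 1 = 2 := by decide
    have e1m : (1:ZMod 3) - 1 = 0 := by decide
    have e21 : (2:ZMod 3) + 1 = 0 := by decide
    have e2m : (2:ZMod 3) - 1 = 1 := by decide
    have g0 := hG 0; rw [e01, e0m, hz0, hz1, hz2] at g0
    have g1 := hG 1; rw [e11, e1m, hz0, hz1, hz2] at g1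
    have g2 := hG 2; rw [e21, e2m, hz0, hz1, hz2] at g2
    have l0 := hlen 0; rw [e01, hz0, hz1] at l0
    have l1 := hlen 1; rw [e11, hz1, hz2] at l1
    have l2 := hlen 2; rw [e21, hz2, hz0] at l2
    rw [Complex.ext_iff] at g0 g1 g2
    simp only [Complex.add_re, Complex.add_im, Complex.mul_re, Complex.mul_im,
      Complex.sub_re, Complex.sub_im, Complex.ofReal_re, Complex.ofReal_im,
      Complex.zero_re, Complex.zero_im, Complex.conj_re, Complex.conj_im,
      RingHom.coe_coe] at g0 g1 g2 l0 l1 l2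
    norm_num at g0 g1 g2 l0 l1 l2
    obtain ⟨g01, g02⟩ := g0
    obtain ⟨g11, g12⟩ := g1
    obtain ⟨g21, g22⟩ := g2
    have hy10 : (Ψ 1).im - (Ψ 0).im = s*((Ψ 1).re - (Ψ 0).re) := by linear_combination 2*l0
    have hy20 : (Ψ 2).im - (Ψ 0).im = s*((Ψ 1).re - (Ψ 0).re) := by linear_combination 2*l0 - l1
    have hxx : (Ψ 2).re - (Ψ 0).re = -((Ψ 1).re - (Ψ 0).re) := by
      have h : s*((Ψ 2).re - (Ψ 0).re + ((Ψ 1).re - (Ψ 0).re)) = 0 := by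
        linear_combination (-2)*l2 - hy20
      have := (mul_eq_zero.mp h).resolve_left hsne
      linarith
    have h4 : (a 0 + a 1 + a 2) * (4*((Ψ 0).re - (Ψ 1).re)) = 0 := by
      linear_combination g11 - g21 - s*g02 + s*(a 0)*hy10 + s*(a 2)*hy20
        + ((a 0 + a 2)*((Ψ 1).re - (Ψ 0).re))*hs3 - (2*a 1 + a 2)*hxx
    have hp : (Ψ 1).re = (Ψ 0).re := by
      have := (mul_eq_zero.mp h4).resolve_left hσ
      linarith
    have hre2 : (Ψ 2).re = (Ψ 0).re := by linarith [hxx]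
    have him1 : (Ψ 1).im = (Ψ 0).im := by
      have := hy10; rw [hp] at this; linarith
    have him2 : (Ψ 2).im = (Ψ 0).im := by
      have := hy20; rw [hp] at this; linarith
    have hb0 : adot 0 = 0 := by
      have h : s * adot 0 = 0 := by
        linear_combination 2*g11 - 2*a 1*hre2 + 2*a 1*hp + 2*a 0*hp
      exact (mul_eq_zero.mp h).resolve_left hsne
    have hb2 : adot 2 = 0 := by
      have h : s * adot 2 = 0 := by
        linear_combination 2*g21 + 2*a 2*hre2 + 2*a 1*hre2 - 2*a 1*hp
      exact (mul_eq_zero.mp h).resolve_left hsne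
    have hb1 : adot 1 = 0 := by
      linear_combination -g12 + a 1*him2 - a 1*him1 - (1/2)*hb0 - a 0*him1
    have hΨ1 : Ψ 1 = Ψ 0 := Complex.ext hp him1
    have hΨ2 : Ψ 2 = Ψ 0 := Complex.ext hre2 him2
    have hcase : ∀ j : ZMod 3, j = 0 ∨ j = 1 ∨ j = 2 := by decide
    refine ⟨⟨Ψ 0, fun j => ?_⟩, fun j => ?_⟩
    · rcases hcase j with h|h|h <;> rw [h]
      · exact hΨ1
      · exact hΨ2
    · rcases hcase j with h|h|h <;> rw [h]
      · exact hb0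
      · exact hb1
      · exact hb2
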